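/- Let A be an infinite set of propositional atoms and ⟨F_c, 𝒱, ⊨⟩ the classical propositional semantic structure over A. Then there does not exist a normal characterization of the family of all pivotal consequence relations; that is, there is no cardinal λ ≤ |F_c| and relation Φ on P(F_c)^{2λ} such that for every relation |~ on P(F_c) × F_c, |~ is a pivotal consequence relation if and only if for all Γ_1, …, Γ_λ ⊆ F_c, the tuple (Γ_1, …, Γ_λ, C_|~(Γ_1), …, C_|~(Γ_λ)) belongs to Φ. -/

import Mathlib

/-- Classical propositional formulas over a set `A` of atoms, with constants
`false`, `true` and connectives `¬`, `∨`, `∧`. -/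
inductive PropForm (A : Type u) : Type u
  | atom : A → PropForm A
  | fls : PropForm A
  | tru : PropForm A
  | neg : PropForm A → PropForm A
  | disj : PropForm A → PropForm A → PropForm A
  | conj : PropForm A → PropForm A → PropForm A

/-- Classical two-valued evaluation of a formula under a valuation `v : A → Bool`. -/
def PropForm.eval {A : Type u} (v : A → Bool) : PropForm A → Bool
  | atom a => v a
  | fls => false
  | tru => true
  | neg φ => !(φ.eval v)
  | disj φ ψ => φ.eval v || ψ.eval v
  | conj φ ψ => φ.eval v && ψ.eval v

/-- Classical satisfaction: `v ⊨ α` iff `α` evaluates to `true` under `v`. -/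
def satC {A : Type u} (v : A → Bool) (α : PropForm A) : Prop :=
  α.eval v = true

/-- The set of models of a set of formulas `Γ`. -/
def modSet {F V : Type*} (sat : V → F → Prop) (Γ : Set F) : Set V :=
  {v | ∀ α ∈ Γ, sat v α}

/-- `D`: the family of definable sets of valuations. -/
def defFam {F V : Type*} (sat : V → F → Prop) : Set (Set V) :=
  {S | ∃ Γ : Set F, modSet sat Γ = S}

/-- `C_|~(Γ) = {α | Γ |~ α}`. -/
def relC {F : Type*} (rel : Set F → F → Prop) (Γ : Set F) : Set F :=
  {α | rel Γ α}

/-- `|~` is a pivotal consequence relation: there is a strongly coherent choice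
function `μ` from `D` to `P(𝒱)` defining it. -/
def isPivotal {F V : Type*} (sat : V → F → Prop) (rel : Set F → F → Prop) : Prop :=
  ∃ μ : Set V → Set V,
    (∀ A ∈ defFam sat, μ A ⊆ A) ∧
    (∀ A ∈ defFam sat, ∀ B ∈ defFam sat, μ B ∩ A ⊆ μ A) ∧
    (∀ (Γ : Set F) (α : F), rel Γ α ↔ μ (modSet sat Γ) ⊆ modSet sat {α})

namespace Stmt17Aux

open Cardinal

/-! ### Counting formulas -/

/-- A prefix-free encoding of formulas as lists. -/
def enc {A : Type u} : PropForm A → List ((Bool × Bool × Bool) ⊕ A)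
  | .atom a => [Sum.inr a]
  | .fls => [Sum.inl (false, false, false)]
  | .tru => [Sum.inl (false, false, true)]
  | .neg φ => Sum.inl (false, true, false) :: enc φ
  | .disj φ ψ => Sum.inl (false, true, true) :: (enc φ ++ enc ψ)
  | .conj φ ψ => Sum.inl (true, false, false) :: (enc φ ++ enc ψ)

lemma enc_prefix {A : Type u} : ∀ (φ ψ : PropForm A) (l l' : List ((Bool × Bool × Bool) ⊕ A)),
    enc φ ++ l = enc ψ ++ l' → φ = ψ ∧ l = l' := by
  intro φ
  induction φ with
  | atom a =>
    intro ψ l l' h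
    cases ψ <;> simp [enc] at h
    exact ⟨by rw [h.1], h.2⟩
  | fls =>
    intro ψ l l' h
    cases ψ <;> simp [enc] at h
    exact ⟨rfl, h⟩
  | tru =>
    intro ψ l l' h
    cases ψ <;> simp [enc] at h
    exact ⟨rfl, h⟩
  | neg φ ih =>
    intro ψ l l' h
    cases ψ <;> simp [enc] at h
    case neg ψ' =>
      obtain ⟨h1, h2⟩ := ih ψ' l l' h
      exact ⟨by rw [h1], h2⟩
  | disj φ₁ φ₂ ih1 ih2 =>
    intro ψ l l' h
    cases ψ <;> simp [enc] at h
    case disj ψ' χ' =>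
      obtain ⟨h1, h2⟩ := ih1 ψ' _ _ h
      obtain ⟨h3, h4⟩ := ih2 χ' _ _ h2
      exact ⟨by rw [h1, h3], h4⟩
  | conj φ₁ φ₂ ih1 ih2 =>
    intro ψ l l' h
    cases ψ <;> simp [enc] at h
    case conj ψ' χ' =>
      obtain ⟨h1, h2⟩ := ih1 ψ' _ _ h
      obtain ⟨h3, h4⟩ := ih2 χ' _ _ h2
      exact ⟨by rw [h1, h3], h4⟩

lemma enc_injective {A : Type u} : Function.Injective (enc (A := A)) := by
  intro φ ψ h
  exact (enc_prefix φ ψ [] [] (by simpa using h)).1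

instance {A : Type u} [Infinite A] : Infinite (PropForm A) :=
  Infinite.of_injective PropForm.atom (fun a b h => by injection h)

lemma mk_propForm_le {A : Type u} [Infinite A] : #(PropForm A) ≤ #A := by
  haveI : Infinite ((Bool × Bool × Bool) ⊕ A) := Infinite.of_injective Sum.inr Sum.inr_injective
  calc #(PropForm A) ≤ #(List ((Bool × Bool × Bool) ⊕ A)) := mk_le_of_injective enc_injective
    _ = #((Bool × Bool × Bool) ⊕ A) := mk_list_eq_mk _
    _ ≤ #A := by
        rw [mk_sum, Cardinal.lift_uzero]
        calc Cardinal.lift.{u} #(Bool × Bool × Bool) + #A ≤ #A + #A := by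
              exact add_le_add_left (le_of_lt (lt_of_lt_of_le
                (Cardinal.lift_lt_aleph0.mpr (lt_aleph0_of_finite (Bool × Bool × Bool))) (aleph0_le_mk A))) _
          _ = #A := add_eq_self (aleph0_le_mk A)

/-! ### Atoms of a formula and locality of evaluation -/

def atomSet {A : Type u} : PropForm A → Set A
  | .atom a => {a}
  | .fls => ∅
  | .tru => ∅
  | .neg φ => atomSet φ
  | .disj φ ψ => atomSet φ ∪ atomSet ψ
  | .conj φ ψ => atomSet φ ∪ atomSet ψ

lemma atomSet_finite {A : Type u} (φ : PropForm A) : (atomSet φ).Finite := by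
  induction φ with
  | atom a => exact Set.finite_singleton a
  | fls => exact Set.finite_empty
  | tru => exact Set.finite_empty
  | neg φ ih => exact ih
  | disj φ ψ ih1 ih2 => exact ih1.union ih2
  | conj φ ψ ih1 ih2 => exact ih1.union ih2

lemma eval_congr {A : Type u} {v w : A → Bool} (φ : PropForm A)
    (h : ∀ a ∈ atomSet φ, v a = w a) : φ.eval v = φ.eval w := by
  induction φ with
  | atom a => exact h a rfl
  | fls => rfl
  | tru => rfl
  | neg φ ih => simp [PropForm.eval, ih h]
  | disj φ ψ ih1 ih2 =>
    simp [PropForm.eval, ih1 (fun a ha => h a (Or.inl ha)), ih2 (fun a ha => h a (Or.inr ha))]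
  | conj φ ψ ih1 ih2 =>
    simp [PropForm.eval, ih1 (fun a ha => h a (Or.inl ha)), ih2 (fun a ha => h a (Or.inr ha))]

/-- Any satisfiable formula has strictly more models than there are formulas. -/
lemma big_models {A : Type u} [Infinite A] (β : PropForm A) (v : A → Bool) (hv : satC v β) :
    #(PropForm A) < #{w : A → Bool | satC w β} := by
  classical
  have hS : (atomSet β).Finite := atomSet_finite β
  have hcompl : #(↥(atomSet β)ᶜ) = #A :=
    mk_compl_of_infinite _ (lt_of_lt_of_le hS.lt_aleph0 (aleph0_le_mk A))
  let f : (↥(atomSet β)ᶜ → Bool) → {w : A → Bool | satC w β} := fun g =>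
    ⟨fun a => if h : a ∈ atomSet β then v a else g ⟨a, h⟩, by
      show PropForm.eval _ β = true
      have he : PropForm.eval (fun a => if h : a ∈ atomSet β then v a else g ⟨a, h⟩) β
          = PropForm.eval v β := eval_congr β (fun a ha => by simp [dif_pos ha])
      rw [he]; exact hv⟩
  have hf : Function.Injective f := by
    intro g1 g2 h
    funext x
    have hx := congrArg (fun w => (w : { w : A → Bool | satC w β}).1 x.1) h
    simpa [f, dif_neg x.2] using hx
  calc #(PropForm A) ≤ #A := mk_propForm_le
    _ < 2 ^ #A := cantor _
    _ = #(↥(atomSet β)ᶜ → Bool) := by rw [← hcompl]; simp [Cardinal.mk_arrow]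
    _ ≤ #{w : A → Bool | satC w β} := mk_le_of_injective hf

/-! ### The counterexample relation -/

/-- `v` is a "thick" point of `V`: every formula-neighbourhood of `v` meets `V`
in more than `#(PropForm A)` valuations. -/
def Tset {A : Type u} (V : Set (A → Bool)) : Set (A → Bool) :=
  {v | v ∈ V ∧ ∀ β : PropForm A, satC v β →
    #(PropForm A) < #{w : A → Bool | w ∈ V ∧ satC w β}}

/-- The counterexample consequence relation. -/
def myRel {A : Type u} (Γ : Set (PropForm A)) (α : PropForm A) : Prop :=
  Tset (modSet satC Γ) ⊆ modSet satC {α}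

/-- The pivotal relation determined by a set `W` of valuations. -/
def wRel {A : Type u} (W : Set (A → Bool)) (Γ : Set (PropForm A)) (α : PropForm A) : Prop :=
  W ∩ modSet satC Γ ⊆ modSet satC {α}

lemma mem_modSet_singleton {A : Type u} {v : A → Bool} {α : PropForm A} :
    v ∈ modSet satC {α} ↔ satC v α := by
  simp [modSet]

lemma wRel_pivotal {A : Type u} (W : Set (A → Bool)) : isPivotal satC (wRel W) :=
  ⟨fun S => W ∩ S, fun _ _ => Set.inter_subset_right,
    fun _ _ _ _ _ hv => ⟨hv.1.1, hv.2⟩, fun _ _ => Iff.rfl⟩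

lemma tset_univ {A : Type u} [Infinite A] (v : A → Bool) :
    v ∈ Tset (Set.univ : Set (A → Bool)) := by
  refine ⟨trivial, fun β hβ => ?_⟩
  refine lt_of_lt_of_le (big_models β v hβ) (mk_le_mk_of_subset ?_)
  exact fun w hw => ⟨trivial, hw⟩

lemma tset_singleton {A : Type u} [Infinite A] (v : A → Bool) :
    Tset ({v} : Set (A → Bool)) = ∅ := by
  ext u
  simp only [Tset, Set.mem_setOf_eq, Set.mem_empty_iff_false, iff_false, not_and]
  intro _ h
  have h2 := h PropForm.tru rfl
  have h3 : #{w : A → Bool | w ∈ ({v} : Set (A → Bool)) ∧ satC w PropForm.tru} ≤ 1 := by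
    refine le_trans (mk_le_mk_of_subset (fun w hw => hw.1)) ?_
    rw [Cardinal.mk_singleton]
  exact absurd ((lt_of_lt_of_le h2 h3).trans_le (le_of_lt (lt_of_lt_of_le one_lt_aleph0
    (aleph0_le_mk (PropForm A))))) (lt_irrefl _)

lemma modSet_theory {A : Type u} (v : A → Bool) :
    modSet satC {β : PropForm A | satC v β} = {v} := by
  ext w
  constructor
  · intro hw
    have : w = v := by
      funext a
      cases hva : v a with
      | false =>
        have := hw (PropForm.neg (PropForm.atom a))
          (show satC v _ by simp [satC, PropForm.eval, hva])
        simpa [satC, PropForm.eval] using this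
      | true =>
        exact hw (PropForm.atom a) (show satC v _ by simp [satC, PropForm.eval, hva])
    exact this
  · rintro rfl
    exact fun β hβ => hβ

lemma modSet_empty {A : Type u} :
    modSet satC (∅ : Set (PropForm A)) = (Set.univ : Set (A → Bool)) := by
  ext w; simp [modSet]

lemma modSet_fls {A : Type u} :
    modSet satC ({PropForm.fls} : Set (PropForm A)) = (∅ : Set (A → Bool)) := by
  ext w; simp [modSet, satC, PropForm.eval]

/-- The counterexample relation is not pivotal. -/
lemma myRel_not_pivotal {A : Type u} [Infinite A] :
    ¬ isPivotal (satC (A := A)) (myRel (A := A)) := by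
  rintro ⟨μ, hsub, hcoh, hiff⟩
  have hsing : ∀ v : A → Bool, μ {v} = ∅ := by
    intro v
    have h1 := (hiff {β : PropForm A | satC v β} PropForm.fls).mp (by
      show Tset (modSet satC {β : PropForm A | satC v β}) ⊆ _
      rw [modSet_theory, tset_singleton]
      exact Set.empty_subset _)
    rw [modSet_theory, modSet_fls] at h1
    exact Set.subset_empty_iff.mp h1
  have hnot : ¬ myRel (∅ : Set (PropForm A)) PropForm.fls := by
    intro h
    have := h (by rw [modSet_empty]; exact tset_univ (fun _ => false))
    rw [modSet_fls] at this
    exact this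
  have h2 : ¬ (μ (modSet satC (∅ : Set (PropForm A))) ⊆ modSet satC {PropForm.fls}) :=
    fun h => hnot ((hiff ∅ PropForm.fls).mpr h)
  rw [modSet_empty, modSet_fls] at h2
  obtain ⟨v, hv, -⟩ := Set.not_subset.mp h2
  have hmem : v ∈ μ (Set.univ : Set (A → Bool)) ∩ {v} := ⟨hv, rfl⟩
  have := hcoh {v} ⟨{β : PropForm A | satC v β}, modSet_theory v⟩
    Set.univ ⟨∅, modSet_empty⟩ hmem
  rw [hsing v] at this
  exact this

/-- Local repair: on any `|F|`-indexed family of premise sets, `myRel` agrees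
with some pivotal relation. -/
lemma repair {A : Type u} [Infinite A] (ι : Type u) (hι : #ι ≤ #(PropForm A))
    (G : ι → Set (PropForm A)) :
    ∃ W : Set (A → Bool), ∀ i, relC (myRel (A := A)) (G i) = relC (wRel W) (G i) := by
  classical
  set κ := #(PropForm A) with hκ
  have hκ0 : ℵ₀ ≤ κ := aleph0_le_mk _
  let X : ι × PropForm A → Set (A → Bool) :=
    fun p => {w | w ∈ modSet satC (G p.1) ∧ satC w p.2}
  let Y : ι × PropForm A → Set (A → Bool) := fun p => if #(X p) ≤ κ then X p else ∅
  let B : Set (A → Bool) := ⋃ p, Y p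
  have hYle : ∀ p, #(Y p) ≤ κ := by
    intro p
    by_cases h : #(X p) ≤ κ
    · simpa [Y, if_pos h] using h
    · simp [Y, if_neg h]
  have hB : #B ≤ κ := by
    calc #B ≤ #(ι × PropForm A) * ⨆ p, #(Y p) := mk_iUnion_le Y
      _ ≤ κ * κ := by
          refine mul_le_mul' ?_ (ciSup_le' hYle)
          rw [Cardinal.mk_prod, Cardinal.lift_id, Cardinal.lift_id]
          calc #ι * κ ≤ κ * κ := mul_le_mul_left hι _
            _ = κ := Cardinal.mul_eq_self hκ0
      _ = κ := Cardinal.mul_eq_self hκ0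
  refine ⟨Bᶜ, fun i => ?_⟩
  ext α
  simp only [relC, Set.mem_setOf_eq]
  constructor
  · intro h w hw
    apply h
    refine ⟨hw.2, fun β hβ => ?_⟩
    by_contra hle
    push_neg at hle
    refine hw.1 (Set.mem_iUnion.mpr ⟨(i, β), ?_⟩)
    show w ∈ Y (i, β)
    have : Y (i, β) = X (i, β) := if_pos hle
    rw [this]
    exact ⟨hw.2, hβ⟩
  · intro h v hv
    by_contra hvα
    have hvf : PropForm.eval v α = false := by
      cases hb : PropForm.eval v α with
      | false => rfl
      | true => exact absurd (mem_modSet_singleton.mpr hb) hvα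
    have hvneg : satC v (PropForm.neg α) := by simp [satC, PropForm.eval, hvf]
    have hbig := hv.2 (PropForm.neg α) hvneg
    have hnsub : ¬ ({w : A → Bool | w ∈ modSet satC (G i) ∧ satC w (PropForm.neg α)} ⊆ B) := by
      intro hsub
      exact absurd ((mk_le_mk_of_subset hsub).trans hB) (not_le.mpr hbig)
    obtain ⟨w, hwX, hwB⟩ := Set.not_subset.mp hnsub
    have hwmem := h ⟨hwB, hwX.1⟩
    have hwα : satC w α := mem_modSet_singleton.mp hwmem
    have : PropForm.eval w (PropForm.neg α) = true := hwX.2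
    rw [show PropForm.eval w (PropForm.neg α) = !(PropForm.eval w α) from rfl, hwα] at this
    simp at this

end Stmt17Aux

/-- Over an infinite set of atoms `A`, there is no normal
characterization of the family of all pivotal consequence relations: there is no
cardinal `λ ≤ |F_c|` (represented by an index type `ι` with `|ι| ≤ |F_c|`) and relation
`Φ` on `P(F_c)^{2λ}` such that for every `|~`, `|~` is pivotal iff every tuple
`(Γ_1, …, Γ_λ, C_|~(Γ_1), …, C_|~(Γ_λ))` belongs to `Φ`. -/
theorem stmt17 (A : Type u) [Infinite A] :
    ¬ ∃ (ι : Type u) (_ : Cardinal.mk ι ≤ Cardinal.mk (PropForm A))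
        (Φ : Set ((ι → Set (PropForm A)) × (ι → Set (PropForm A)))),
      ∀ rel : Set (PropForm A) → PropForm A → Prop,
        isPivotal (satC (A := A)) rel ↔
          ∀ G : ι → Set (PropForm A), (G, fun i => relC rel (G i)) ∈ Φ := by
  rintro ⟨ι, hι, Φ, hΦ⟩
  refine Stmt17Aux.myRel_not_pivotal (A := A) ((hΦ _).mpr fun G => ?_)
  obtain ⟨W, hW⟩ := Stmt17Aux.repair ι hι G
  have hmem := (hΦ _).mp (Stmt17Aux.wRel_pivotal W) G
  have heq : (fun i => relC (Stmt17Aux.myRel (A := A)) (G i))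
      = fun i => relC (Stmt17Aux.wRel W) (G i) := funext hW
  rw [heq]
  exact hmem
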